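/- Define the scaled Walsh–Hadamard matrices H_m ∈ ℝ^{2^m × 2^m} recursively by H_0 := (1) and H_{m+1} := (1/√2) [[H_m, H_m], [H_m, −H_m]]. Define the class of recursive symmetric block Toeplitz (RSBT) matrices inductively: every 1 × 1 real matrix is RSBT, and a 2^{m+1} × 2^{m+1} real matrix is RSBT if and only if it has the block form [[A, B], [B, A]] where A and B are 2^m × 2^m RSBT matrices. Then for every m ∈ ℕ and every RSBT matrix K ∈ ℝ^{2^m × 2^m}, the matrix H_m K H_m is diagonal; equivalently, K = H_m Λ H_m for some diagonal matrix Λ ∈ ℝ^{2^m × 2^m}. -/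

import Mathlib

open Matrix

def sumEquiv (m : ℕ) : Fin (2 ^ m) ⊕ Fin (2 ^ m) ≃ Fin (2 ^ (m + 1)) :=
  finSumFinEquiv.trans (finCongr (by ring))

noncomputable def Hmat : (m : ℕ) → Matrix (Fin (2 ^ m)) (Fin (2 ^ m)) ℝ
  | 0 => 1
  | m + 1 =>
      (Real.sqrt 2)⁻¹ •
        (Matrix.reindex (sumEquiv m) (sumEquiv m)
          (Matrix.fromBlocks (Hmat m) (Hmat m) (Hmat m) (-(Hmat m))))

inductive IsRSBT : (m : ℕ) → Matrix (Fin (2 ^ m)) (Fin (2 ^ m)) ℝ → Prop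
  | base (M : Matrix (Fin (2 ^ 0)) (Fin (2 ^ 0)) ℝ) : IsRSBT 0 M
  | step {m : ℕ} (A B : Matrix (Fin (2 ^ m)) (Fin (2 ^ m)) ℝ) :
      IsRSBT m A → IsRSBT m B →
      IsRSBT (m + 1) (Matrix.reindex (sumEquiv m) (sumEquiv m) (Matrix.fromBlocks A B B A))

lemma reindex_isDiag {m : ℕ} {M : Matrix (Fin (2^m) ⊕ Fin (2^m)) (Fin (2^m) ⊕ Fin (2^m)) ℝ}
    (h : M.IsDiag) : (Matrix.reindex (sumEquiv m) (sumEquiv m) M).IsDiag := by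
  intro i j hij
  exact h (fun he => hij (by simpa using congrArg (sumEquiv m) he))

lemma sqrt2_inv_sq : (Real.sqrt 2)⁻¹ * (Real.sqrt 2)⁻¹ = 2⁻¹ := by
  rw [← mul_inv]
  norm_num [Real.mul_self_sqrt]

lemma reindex_mul {m : ℕ} (M N : Matrix (Fin (2^m) ⊕ Fin (2^m)) (Fin (2^m) ⊕ Fin (2^m)) ℝ) :
    Matrix.reindex (sumEquiv m) (sumEquiv m) M * Matrix.reindex (sumEquiv m) (sumEquiv m) N
      = Matrix.reindex (sumEquiv m) (sumEquiv m) (M * N) := by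
  simp only [Matrix.reindex_apply]
  exact Matrix.submatrix_mul_equiv M N _ (sumEquiv m).symm _

lemma Hmat_mul_self (m : ℕ) : Hmat m * Hmat m = 1 := by
  induction m with
  | zero => simp [Hmat]
  | succ m ih =>
    rw [Hmat, Matrix.smul_mul, Matrix.mul_smul, smul_smul, sqrt2_inv_sq, reindex_mul,
      Matrix.fromBlocks_multiply]
    have b1 : Hmat m * Hmat m + Hmat m * Hmat m = (1 : Matrix (Fin (2^m)) (Fin (2^m)) ℝ) + 1 := by
      rw [ih]
    have b2 : Hmat m * Hmat m + Hmat m * -Hmat m = 0 := by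
      rw [Matrix.mul_neg, add_neg_cancel]
    have b3 : Hmat m * Hmat m + -Hmat m * Hmat m = 0 := by
      rw [Matrix.neg_mul, add_neg_cancel]
    have b4 : Hmat m * Hmat m + -Hmat m * -Hmat m = (1 : Matrix (Fin (2^m)) (Fin (2^m)) ℝ) + 1 := by
      rw [Matrix.neg_mul, Matrix.mul_neg, neg_neg, ih]
    rw [b1, b2, b3, b4]
    have hfb : Matrix.fromBlocks ((1 : Matrix (Fin (2^m)) (Fin (2^m)) ℝ) + 1) 0 0 (1 + 1)
        = (1 : Matrix (Fin (2^m) ⊕ Fin (2^m)) (Fin (2^m) ⊕ Fin (2^m)) ℝ) + 1 := by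
      rw [← Matrix.fromBlocks_one, Matrix.fromBlocks_add, add_zero]
    rw [hfb]
    rw [Matrix.reindex_apply]
    ext i j
    by_cases hij : i = j
    · simp [hij, Matrix.one_apply]
      norm_num
    · simp [Matrix.one_apply, hij, (sumEquiv m).symm.injective.ne hij]

lemma HKH_isDiag (m : ℕ) (K : Matrix (Fin (2 ^ m)) (Fin (2 ^ m)) ℝ) (hK : IsRSBT m K) :
    (Hmat m * K * Hmat m).IsDiag := by
  induction hK with
  | base M =>
    intro i j hij
    have hi := i.isLt; have hj := j.isLt
    norm_num at hi hj
    exact absurd (Fin.ext (by omega)) hij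
  | @step n A B hA hB ihA ihB =>
    rw [Hmat, Matrix.smul_mul, Matrix.mul_smul, Matrix.smul_mul, smul_smul, sqrt2_inv_sq,
      reindex_mul, reindex_mul, Matrix.fromBlocks_multiply, Matrix.fromBlocks_multiply]
    apply Matrix.IsDiag.smul
    apply reindex_isDiag
    rw [Matrix.isDiag_fromBlocks_iff]
    refine ⟨?_, ?_, ?_, ?_⟩
    · have := (ihA.add ihB).add (ihA.add ihB)
      convert this using 1
      case e'_3 => rfl
      noncomm_ring
    · noncomm_ring
    · noncomm_ring
    · have := (ihA.sub ihB).add (ihA.sub ihB)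
      convert this using 1
      case e'_3 => rfl
      noncomm_ring

theorem stmt_5 (m : ℕ) (K : Matrix (Fin (2 ^ m)) (Fin (2 ^ m)) ℝ) (hK : IsRSBT m K) :
    (Hmat m * K * Hmat m).IsDiag ∧
    ∃ Λ : Matrix (Fin (2 ^ m)) (Fin (2 ^ m)) ℝ, Λ.IsDiag ∧ K = Hmat m * Λ * Hmat m := by
  refine ⟨HKH_isDiag m K hK, Hmat m * K * Hmat m, HKH_isDiag m K hK, ?_⟩
  have h := Hmat_mul_self m
  calc K = 1 * K * 1 := by rw [one_mul, mul_one]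
  _ = (Hmat m * Hmat m) * K * (Hmat m * Hmat m) := by rw [h]
  _ = Hmat m * (Hmat m * K * Hmat m) * Hmat m := by noncomm_ring
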